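/- Let x ≥ 2 and let 𝒫 be a set of primes ≤ x, with ℰ the complement (primes ≤ x not in 𝒫). Then the sum of 1/n over all n ≤ x whose prime factors all lie in 𝒫 is at least (∑_{n ≤ x} 1/n) · ∏_{p ∈ ℰ} (1 - 1/p). -/

import Mathlib

open Finset

open Classical in
private lemma sieve_step (N q : ℕ) (hq : q.Prime) (Q : Finset ℕ) :
    (1 - 1/(q:ℝ)) *
      ∑ n ∈ (Finset.Icc 1 N).filter (fun n => ∀ p, p.Prime → p ∣ n → p ∉ Q), (1:ℝ)/n
    ≤ ∑ n ∈ (Finset.Icc 1 N).filter (fun n => ∀ p, p.Prime → p ∣ n → p ∉ insert q Q),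
        (1:ℝ)/n := by
  classical
  set S := (Finset.Icc 1 N).filter (fun n => ∀ p, p.Prime → p ∣ n → p ∉ Q) with hS
  have hq2 : 2 ≤ q := hq.two_le
  have hq0 : q ≠ 0 := hq.ne_zero
  have hqR : (0:ℝ) < q := by exact_mod_cast hq.pos
  have hfe : (Finset.Icc 1 N).filter (fun n => ∀ p, p.Prime → p ∣ n → p ∉ insert q Q)
      = S.filter (fun n => ¬ q ∣ n) := by
    rw [hS, filter_filter]
    apply filter_congr
    intro n _
    simp only [Finset.mem_insert]
    constructor
    · intro h
      exact ⟨fun p hp hpn hpQ => h p hp hpn (Or.inr hpQ),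
             fun hqn => h q hq hqn (Or.inl rfl)⟩
    · rintro ⟨h1, h2⟩ p hp hpn hor
      rcases hor with rfl | hpQ
      · exact h2 hpn
      · exact h1 p hp hpn hpQ
  rw [hfe]
  have hdiv : ∑ n ∈ S.filter (fun n => q ∣ n), (1:ℝ)/n ≤ (1/q) * ∑ n ∈ S, (1:ℝ)/n := by
    have himg : ∑ n ∈ S.filter (fun n => q ∣ n), (1:ℝ)/n
        = ∑ m ∈ (S.filter (fun n => q ∣ n)).image (· / q), (1/(q:ℝ)) * (1/(m:ℝ)) := by
      rw [Finset.sum_image]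
      · apply Finset.sum_congr rfl
        intro n hn
        obtain ⟨hnS, hqn⟩ := mem_filter.mp hn
        have hn1 : 1 ≤ n := (Finset.mem_Icc.mp (mem_filter.mp hnS).1).1
        have hn0 : (n:ℝ) ≠ 0 := by positivity
        have : ((n / q : ℕ) : ℝ) = (n:ℝ) / q := by
          rw [Nat.cast_div hqn (by exact_mod_cast hq0)]
        rw [this, one_div_div]
        field_simp
      · intro a ha b hb hab
        obtain ⟨-, hqa⟩ := mem_filter.mp ha
        obtain ⟨-, hqb⟩ := mem_filter.mp hb
        have := congrArg (· * q) hab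
        simpa [Nat.div_mul_cancel hqa, Nat.div_mul_cancel hqb] using this
    rw [himg, ← Finset.mul_sum]
    apply mul_le_mul_of_nonneg_left _ (by positivity)
    apply Finset.sum_le_sum_of_subset_of_nonneg
    · intro m hm
      obtain ⟨n, hn, rfl⟩ := Finset.mem_image.mp hm
      obtain ⟨hnS, hqn⟩ := mem_filter.mp hn
      obtain ⟨hnI, hnP⟩ := mem_filter.mp hnS
      obtain ⟨hn1, hnN⟩ := Finset.mem_Icc.mp hnI
      have hnq1 : 1 ≤ n / q := Nat.one_le_div_iff hq.pos |>.mpr (Nat.le_of_dvd hn1 hqn)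
      have hnqN : n / q ≤ N := le_trans (Nat.div_le_self n q) hnN
      refine mem_filter.mpr ⟨Finset.mem_Icc.mpr ⟨hnq1, hnqN⟩, ?_⟩
      intro p hp hpd
      exact hnP p hp (hpd.trans (Nat.div_dvd_of_dvd hqn))
    · intro m _ _
      positivity
  have hsplit := Finset.sum_filter_add_sum_filter_not S (fun n => q ∣ n) (fun n => (1:ℝ)/n)
  linarith [hdiv, hsplit]

open Classical in
private lemma sieve_all (N : ℕ) (Q : Finset ℕ) (hQ : ∀ q ∈ Q, q.Prime) :
    (∑ n ∈ Finset.Icc 1 N, (1:ℝ)/n) * ∏ q ∈ Q, (1 - 1/(q:ℝ))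
    ≤ ∑ n ∈ (Finset.Icc 1 N).filter (fun n => ∀ p, p.Prime → p ∣ n → p ∉ Q), (1:ℝ)/n := by
  classical
  revert hQ
  induction Q using Finset.induction_on with
  | empty =>
    intro _
    simp
  | @insert q Q hqQ ih =>
    intro hQ
    have hq : q.Prime := hQ q (mem_insert_self q Q)
    have hQ' : ∀ p ∈ Q, p.Prime := fun p hp => hQ p (mem_insert_of_mem hp)
    have hnn : (0:ℝ) ≤ 1 - 1/(q:ℝ) := by
      have : (2:ℝ) ≤ q := by exact_mod_cast hq.two_le
      have hq1 : 1/(q:ℝ) ≤ 1 := by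
        rw [div_le_one (by linarith)]; linarith
      linarith
    rw [Finset.prod_insert hqQ]
    calc (∑ n ∈ Finset.Icc 1 N, (1:ℝ)/n) * ((1 - 1/(q:ℝ)) * ∏ p ∈ Q, (1 - 1/(p:ℝ)))
        = (1 - 1/(q:ℝ)) * ((∑ n ∈ Finset.Icc 1 N, (1:ℝ)/n) * ∏ p ∈ Q, (1 - 1/(p:ℝ))) := by
          ring
      _ ≤ (1 - 1/(q:ℝ)) *
            ∑ n ∈ (Finset.Icc 1 N).filter (fun n => ∀ p, p.Prime → p ∣ n → p ∉ Q), (1:ℝ)/n :=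
          mul_le_mul_of_nonneg_left (ih hQ') hnn
      _ ≤ _ := sieve_step N q hq Q

open Finset Classical in
theorem stmt_0 (x : ℝ) (hx : 2 ≤ x) (P : Finset ℕ)
    (hP : ∀ p ∈ P, Nat.Prime p ∧ (p : ℝ) ≤ x) :
    ∑ n ∈ (Finset.Icc 1 ⌊x⌋₊).filter (fun n => ∀ p, p.Prime → p ∣ n → p ∈ P),
        (1 : ℝ) / n ≥
      (∑ n ∈ Finset.Icc 1 ⌊x⌋₊, (1 : ℝ) / n) *
        ∏ p ∈ (Finset.Icc 1 ⌊x⌋₊).filter (fun p => p.Prime ∧ p ∉ P), (1 - 1 / (p : ℝ)) := by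
  classical
  set N := ⌊x⌋₊ with hN
  set E := (Finset.Icc 1 N).filter (fun p => p.Prime ∧ p ∉ P) with hE
  have hEprime : ∀ q ∈ E, q.Prime := by
    intro q hq
    exact (mem_filter.mp hq).2.1
  have hsets : (Finset.Icc 1 N).filter (fun n => ∀ p, p.Prime → p ∣ n → p ∈ P)
      = (Finset.Icc 1 N).filter (fun n => ∀ p, p.Prime → p ∣ n → p ∉ E) := by
    apply filter_congr
    intro n hn
    obtain ⟨hn1, hnN⟩ := Finset.mem_Icc.mp hn
    constructor
    · intro h p hp hpd hpE
      exact (mem_filter.mp hpE).2.2 (h p hp hpd)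
    · intro h p hp hpd
      by_contra hpP
      have hpI : p ∈ Finset.Icc 1 N :=
        Finset.mem_Icc.mpr ⟨hp.one_lt.le.trans' (by norm_num), (Nat.le_of_dvd hn1 hpd).trans hnN⟩
      exact h p hp hpd (mem_filter.mpr ⟨hpI, hp, hpP⟩)
  rw [ge_iff_le, hsets]
  exact sieve_all N E hEprime
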